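/- (Lemma 3.6, block-triangular resolvents). Let H₁, …, H_N be real Hilbert spaces and K = H₁ ⊕ ⋯ ⊕ H_N their Hilbert direct sum (ℓ² product). For each i let A_i : H_i → Set H_i be maximally monotone, and for i, j ∈ {1, …, N} let H_{ij} : H_j → H_i be bounded linear with H_{ij} = 0 whenever j > i (lower triangular), where each diagonal block H_{ii} is self-adjoint and τ_i-strongly positive for some τ_i > 0. Define H : K → K by (H z)_i = Σ_{j ≤ i} H_{ij} z_j. Then for every z ∈ K there exists a unique z̄ ∈ K such that z_i − (H z̄)_i ∈ A_i(z̄_i) for all i (i.e. the resolvent (H + A)⁻¹ is single-valued with full domain), and the map z ↦ z̄ is continuous; moreover z̄ is obtained recursively: z̄_i is the unique solution of z_i − Σ_{j < i} H_{ij} z̄_j − H_{ii} z̄_i ∈ A_i(z̄_i). -/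

import Mathlib

open scoped InnerProductSpace

/-- A set-valued operator is monotone. -/
def IsMonotoneSet {E : Type*} [NormedAddCommGroup E] [InnerProductSpace ℝ E]
    (A : E → Set E) : Prop :=
  ∀ x y u v, u ∈ A x → v ∈ A y → (0:ℝ) ≤ ⟪x - y, u - v⟫_ℝ

/-- A set-valued operator is maximally monotone. -/
def IsMaxMonotone {E : Type*} [NormedAddCommGroup E] [InnerProductSpace ℝ E]
    (A : E → Set E) : Prop :=
  IsMonotoneSet A ∧ ∀ B : E → Set E, IsMonotoneSet B → (∀ x, A x ⊆ B x) → ∀ x, B x = A x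


section KirszbraunAux
open Finset


variable {E : Type*} [NormedAddCommGroup E] [InnerProductSpace ℝ E]

/-- quadratic identity for convex combinations -/
lemma quad_identity (T : Finset E) (w : E → ℝ) (hw1 : ∑ v ∈ T, w v = 1) (c : E → E) :
    ∑ u ∈ T, ∑ v ∈ T, w u * w v * ‖c u - c v‖ ^ 2
      = 2 * (∑ v ∈ T, w v * ‖c v‖ ^ 2) - 2 * ‖∑ v ∈ T, w v • c v‖ ^ 2 := by
  have hexp : ∀ u v : E, ‖c u - c v‖ ^ 2 = ‖c u‖ ^ 2 + ‖c v‖ ^ 2 - 2 * ⟪c u, c v⟫_ℝ := by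
    intro u v
    have := norm_sub_sq_real (c u) (c v)
    linarith
  have hsum : ∑ u ∈ T, ∑ v ∈ T, w u * w v * ⟪c u, c v⟫_ℝ
      = ‖∑ v ∈ T, w v • c v‖ ^ 2 := by
    rw [← real_inner_self_eq_norm_sq, sum_inner]
    refine Finset.sum_congr rfl fun u hu => ?_
    rw [inner_sum]
    refine Finset.sum_congr rfl fun v hv => ?_
    rw [real_inner_smul_left, real_inner_smul_right]
    ring
  calc ∑ u ∈ T, ∑ v ∈ T, w u * w v * ‖c u - c v‖ ^ 2
      = ∑ u ∈ T, ∑ v ∈ T, (w u * w v * ‖c u‖ ^ 2 + w u * w v * ‖c v‖ ^ 2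
          - 2 * (w u * w v * ⟪c u, c v⟫_ℝ)) := by
        refine Finset.sum_congr rfl fun u hu => Finset.sum_congr rfl fun v hv => ?_
        rw [hexp u v]; ring
    _ = 2 * (∑ v ∈ T, w v * ‖c v‖ ^ 2) - 2 * ‖∑ v ∈ T, w v • c v‖ ^ 2 := by
        rw [← hsum]
        have h1 : ∀ f : E → ℝ, ∑ u ∈ T, ∑ v ∈ T, w u * w v * f u = ∑ u ∈ T, w u * f u := by
          intro f
          refine Finset.sum_congr rfl fun u hu => ?_
          calc ∑ v ∈ T, w u * w v * f u = (w u * f u) * ∑ v ∈ T, w v := by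
                rw [Finset.mul_sum]; exact Finset.sum_congr rfl fun v _ => by ring
            _ = w u * f u := by rw [hw1]; ring
        have h2 : ∑ u ∈ T, ∑ v ∈ T, w u * w v * ‖c v‖ ^ 2 = ∑ v ∈ T, w v * ‖c v‖ ^ 2 := by
          rw [Finset.sum_comm]
          calc ∑ v ∈ T, ∑ u ∈ T, w u * w v * ‖c v‖ ^ 2
              = ∑ v ∈ T, ∑ u ∈ T, w v * w u * ‖c v‖ ^ 2 :=
                Finset.sum_congr rfl fun v _ => Finset.sum_congr rfl fun u _ => by ring
            _ = ∑ v ∈ T, w v * ‖c v‖ ^ 2 := h1 _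
        have h3 : ∑ u ∈ T, ∑ v ∈ T, 2 * (w u * w v * ⟪c u, c v⟫_ℝ)
            = 2 * ∑ u ∈ T, ∑ v ∈ T, w u * w v * ⟪c u, c v⟫_ℝ := by
          rw [Finset.mul_sum]
          exact Finset.sum_congr rfl fun u _ => (Finset.mul_sum _ _ _).symm
        simp only [Finset.sum_sub_distrib, Finset.sum_add_distrib]
        rw [h1 (fun u => ‖c u‖ ^ 2), h2, h3]
        ring

lemma cont_sup' {X ι : Type*} [TopologicalSpace X] (s : Finset ι) (H : s.Nonempty)
    (f : ι → X → ℝ) (hf : ∀ i, Continuous (f i)) :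
    Continuous fun x => s.sup' H fun i => f i x := by
  induction H using Finset.Nonempty.cons_induction with
  | singleton i => simpa using hf i
  | cons i s hi hs ih =>
      simp only [Finset.sup'_cons hs]
      exact (hf i).sup ih

variable [CompleteSpace E]

set_option maxHeartbeats 1000000 in
lemma kirszbraun_finite {ι : Type*} [Fintype ι] [Nonempty ι] (a b : ι → E)
    (hab : ∀ i j, ‖b i - b j‖ ≤ ‖a i - a j‖) :
    ∃ y, ∀ i, ‖y - b i‖ ≤ ‖a i‖ := by
  classical
  have hune : (Finset.univ : Finset ι).Nonempty := Finset.univ_nonempty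
  set f : ι → E → ℝ := fun i y => ‖y - b i‖ ^ 2 - ‖a i‖ ^ 2 with hfdef
  set φ : E → ℝ := fun y => Finset.univ.sup' hune (fun i => f i y) with hφdef
  have hφcont : Continuous φ :=
    cont_sup' _ hune _ (fun i =>
      (((continuous_id.sub continuous_const).norm.pow 2).sub continuous_const))
  set K : Set E := convexHull ℝ (Set.range b) with hKdef
  have hKcomp : IsCompact K := (Set.finite_range b).isCompact_convexHull ℝ
  have hKconv : Convex ℝ K := convex_convexHull ℝ _
  have hKne : K.Nonempty := (Set.range_nonempty b).mono (subset_convexHull ℝ _)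
  obtain ⟨y₀, hy₀K, hmin⟩ := hKcomp.exists_isMinOn hKne hφcont.continuousOn
  set M : ℝ := φ y₀ with hMdef
  have hleM : ∀ i, f i y₀ ≤ M := fun i => Finset.le_sup' (fun j => f j y₀) (Finset.mem_univ i)
  set act : Finset ι := Finset.univ.filter (fun i => f i y₀ = M) with hactdef
  have hactne : act.Nonempty := by
    obtain ⟨i, hi, hieq⟩ := Finset.exists_mem_eq_sup' hune (fun i => f i y₀)
    exact ⟨i, Finset.mem_filter.2 ⟨hi, hieq.symm⟩⟩
  set T : Finset E := act.image b with hTdef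
  have hTne : T.Nonempty := hactne.image b
  set K' : Set E := convexHull ℝ (T : Set E) with hK'def
  have hK'K : K' ⊆ K := by
    apply convexHull_mono
    intro v hv
    obtain ⟨i, _, rfl⟩ := Finset.mem_image.1 (Finset.mem_coe.1 hv)
    exact Set.mem_range_self i
  have hK'comp : IsCompact K' := T.finite_toSet.isCompact_convexHull ℝ
  have hK'conv : Convex ℝ K' := convex_convexHull ℝ _
  have hK'ne : K'.Nonempty := (Finset.coe_nonempty.2 hTne).mono (subset_convexHull ℝ _)
  -- choice of preimages and translated sources
  have hcho : ∀ v, v ∈ T → ∃ i, i ∈ act ∧ b i = v := by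
    intro v hv
    obtain ⟨i, hi, rfl⟩ := Finset.mem_image.1 hv
    exact ⟨i, hi, rfl⟩
  choose idx hidx1 hidx2 using hcho
  set α : E → E := fun v => if h : v ∈ T then a (idx v h) else 0 with hαdef
  have hα1 : ∀ v ∈ T, ‖y₀ - v‖ ^ 2 = ‖α v‖ ^ 2 + M := by
    intro v hv
    have h1 : f (idx v hv) y₀ = M := (Finset.mem_filter.1 (hidx1 v hv)).2
    have h2 : b (idx v hv) = v := hidx2 v hv
    simp only [hfdef, h2] at h1
    simp only [hαdef, dif_pos hv]
    linarith
  have hα2 : ∀ u ∈ T, ∀ v ∈ T, ‖u - v‖ ≤ ‖α u - α v‖ := by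
    intro u hu v hv
    have := hab (idx u hu) (idx v hv)
    rw [hidx2 u hu, hidx2 v hv] at this
    simpa only [hαdef, dif_pos hu, dif_pos hv] using this
  -- projection of y₀ onto K'
  obtain ⟨p, hpK', hpmin⟩ :=
    exists_norm_eq_iInf_of_complete_convex hK'ne (hK'comp.isClosed.isComplete) hK'conv y₀
  have hchar : ∀ w ∈ K', ⟪y₀ - p, w - p⟫_ℝ ≤ 0 :=
    (norm_eq_iInf_iff_real_inner_le_zero hK'conv hpK').1 hpmin
  have hy₀K' : y₀ ∈ K' := by
    by_contra hy₀
    have hpne : p ≠ y₀ := fun h => hy₀ (h ▸ hpK')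
    set δ : ℝ := ‖p - y₀‖ ^ 2 with hδdef
    have hδpos : 0 < δ := by
      have : 0 < ‖p - y₀‖ := norm_pos_iff.2 (sub_ne_zero_of_ne hpne)
      positivity
    have hact_inner : ∀ i ∈ act, ⟪y₀ - b i, p - y₀⟫_ℝ ≤ -δ := by
      intro i hi
      have hbK' : b i ∈ K' :=
        subset_convexHull ℝ _ (Finset.mem_coe.2 (Finset.mem_image_of_mem b hi))
      have h1 := hchar _ hbK'
      have h2 : ⟪y₀ - b i, p - y₀⟫_ℝ = ⟪y₀ - p, b i - p⟫_ℝ - ‖y₀ - p‖ ^ 2 := by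
        have e : y₀ - b i = (y₀ - p) + (p - b i) := by abel
        rw [e, inner_add_left]
        have e2 : ⟪y₀ - p, p - y₀⟫_ℝ = -‖y₀ - p‖ ^ 2 := by
          rw [show p - y₀ = -(y₀ - p) by abel, inner_neg_right, real_inner_self_eq_norm_sq]
        have e3 : ⟪p - b i, p - y₀⟫_ℝ = ⟪y₀ - p, b i - p⟫_ℝ := by
          rw [show p - b i = -(b i - p) by abel, show p - y₀ = -(y₀ - p) by abel,
            inner_neg_neg, real_inner_comm]
        rw [e2, e3]; ring
      have e4 : ‖y₀ - p‖ ^ 2 = δ := by rw [hδdef, norm_sub_rev]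
      linarith
    set B : ℝ := (Finset.univ.sup' hune fun i => 2 * |⟪y₀ - b i, p - y₀⟫_ℝ| + δ) + 1 with hBdef
    have hBi : ∀ i, 2 * |⟪y₀ - b i, p - y₀⟫_ℝ| + δ ≤ B - 1 := by
      intro i
      have := Finset.le_sup' (fun i => 2 * |⟪y₀ - b i, p - y₀⟫_ℝ| + δ) (Finset.mem_univ i)
      simp only [hBdef]; linarith
    have hBpos : 0 < B := by
      have := hBi (Classical.arbitrary ι)
      have h0 : 0 ≤ 2 * |⟪y₀ - b (Classical.arbitrary ι), p - y₀⟫_ℝ| := by positivity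
      linarith
    set g : ι → ℝ := fun i => if f i y₀ = M then 1 else min 1 ((M - f i y₀) / B) with hgdef
    set t : ℝ := Finset.univ.inf' hune g with htdef
    have htle1 : t ≤ 1 := by
      refine le_trans (Finset.inf'_le _ (Finset.mem_univ (Classical.arbitrary ι))) ?_
      simp only [hgdef]
      split_ifs
      · exact le_refl 1
      · exact min_le_left _ _
    have htpos : 0 < t := by
      refine (Finset.lt_inf'_iff hune).2 fun i _ => ?_
      simp only [hgdef]
      split_ifs with hi
      · exact one_pos
      · exact lt_min one_pos (div_pos (by have := hleM i; cases lt_or_eq_of_le this with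
          | inl h => linarith
          | inr h => exact absurd h hi) hBpos)
    set y1 : E := y₀ + t • (p - y₀) with hy1def
    have hy1K : y1 ∈ K := by
      have e : y1 = (1 - t) • y₀ + t • p := by
        rw [hy1def]; module
      rw [e]
      exact hKconv hy₀K (hK'K hpK') (by linarith) (le_of_lt htpos) (by ring)
    have hexp : ∀ i, f i y1 = f i y₀ + 2 * t * ⟪y₀ - b i, p - y₀⟫_ℝ + t ^ 2 * δ := by
      intro i
      have e : y1 - b i = (y₀ - b i) + t • (p - y₀) := by rw [hy1def]; abel
      simp only [hfdef, e]
      rw [norm_add_sq_real, real_inner_smul_right, norm_smul]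
      simp only [Real.norm_eq_abs]
      rw [mul_pow, sq_abs]
      ring
    have hlt : ∀ i ∈ Finset.univ, f i y1 < M := by
      intro i _
      rw [hexp i]
      by_cases hi : f i y₀ = M
      · have h2 := hact_inner i (Finset.mem_filter.2 ⟨Finset.mem_univ i, hi⟩)
        have hmul : 2 * t * ⟪y₀ - b i, p - y₀⟫_ℝ ≤ 2 * t * (-δ) :=
          mul_le_mul_of_nonneg_left h2 (by linarith)
        have ht2 : t ^ 2 * δ ≤ t * δ := by nlinarith [mul_le_mul_of_nonneg_left htle1 htpos.le, hδpos.le]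
        rw [hi]
        nlinarith [hmul, ht2, mul_pos htpos hδpos]
      · have hgap : f i y₀ < M := lt_of_le_of_ne (hleM i) hi
        have hB' := hBi i
        have htg : t ≤ (M - f i y₀) / B := by
          refine le_trans (Finset.inf'_le _ (Finset.mem_univ i)) ?_
          simp only [hgdef, if_neg hi]
          exact min_le_right _ _
        have htB : t * B ≤ M - f i y₀ := (le_div_iff₀ hBpos).1 htg
        have habs : ⟪y₀ - b i, p - y₀⟫_ℝ ≤ |⟪y₀ - b i, p - y₀⟫_ℝ| := le_abs_self _
        have hmul2 : 2 * t * ⟪y₀ - b i, p - y₀⟫_ℝ ≤ 2 * t * |⟪y₀ - b i, p - y₀⟫_ℝ| :=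
          mul_le_mul_of_nonneg_left habs (by linarith)
        have ht2 : t ^ 2 * δ ≤ t * δ := by nlinarith [mul_le_mul_of_nonneg_left htle1 htpos.le, hδpos.le]
        have hBt : t * (2 * |⟪y₀ - b i, p - y₀⟫_ℝ| + δ) ≤ t * (B - 1) :=
          mul_le_mul_of_nonneg_left hB' htpos.le
        nlinarith [hmul2, ht2, hBt, htB, htpos]
    have hcon : φ y1 < φ y₀ := by
      rw [hφdef]
      exact (Finset.sup'_lt_iff hune).2 hlt
    exact absurd (hmin hy1K) (not_le.2 hcon)
  -- y₀ is a convex combination of active targets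
  rw [hK'def, Finset.convexHull_eq] at hy₀K'
  obtain ⟨w, hw0, hw1, hwc⟩ := hy₀K'
  have hwc' : ∑ v ∈ T, w v • v = y₀ := by
    rw [Finset.centerMass_eq_of_sum_1 _ _ hw1] at hwc
    simpa using hwc
  have key : M ≤ 0 := by
    have e1 := quad_identity T w hw1 (fun v => v - y₀)
    have e2 := quad_identity T w hw1 α
    have hS0 : ∑ v ∈ T, w v • (v - y₀) = 0 := by
      simp only [smul_sub, Finset.sum_sub_distrib, hwc', ← Finset.sum_smul, hw1, one_smul,
        sub_self]
    have hle : ∑ u ∈ T, ∑ v ∈ T, w u * w v * ‖(u - y₀) - (v - y₀)‖ ^ 2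
        ≤ ∑ u ∈ T, ∑ v ∈ T, w u * w v * ‖α u - α v‖ ^ 2 := by
      refine Finset.sum_le_sum fun u hu => Finset.sum_le_sum fun v hv => ?_
      have h1 : (u - y₀) - (v - y₀) = u - v := by abel
      rw [h1]
      exact mul_le_mul_of_nonneg_left
        (pow_le_pow_left₀ (norm_nonneg _) (hα2 u hu v hv) 2)
        (mul_nonneg (hw0 u hu) (hw0 v hv))
    have hsum1 : ∑ v ∈ T, w v * ‖v - y₀‖ ^ 2 = (∑ v ∈ T, w v * ‖α v‖ ^ 2) + M := by
      have : ∀ v ∈ T, w v * ‖v - y₀‖ ^ 2 = w v * ‖α v‖ ^ 2 + w v * M := by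
        intro v hv
        rw [norm_sub_rev, hα1 v hv]; ring
      rw [Finset.sum_congr rfl this, Finset.sum_add_distrib, ← Finset.sum_mul, hw1, one_mul]
    rw [e1, e2] at hle
    rw [hS0, hsum1] at hle
    simp only [norm_zero] at hle
    have hz : (0:ℝ) ≤ ‖∑ v ∈ T, w v • α v‖ ^ 2 := sq_nonneg _
    linarith
  refine ⟨y₀, fun i => ?_⟩
  have hi := hleM i
  simp only [hfdef] at hi
  nlinarith [norm_nonneg (y₀ - b i), norm_nonneg (a i)]

lemma exists_min_norm {K : Set E} (hne : K.Nonempty) (hconv : Convex ℝ K) (hcl : IsClosed K) :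
    ∃ v ∈ K, ∀ w ∈ K, ‖v‖ ≤ ‖w‖ := by
  obtain ⟨v, hvK, hv⟩ := exists_norm_eq_iInf_of_complete_convex hne hcl.isComplete hconv 0
  refine ⟨v, hvK, fun w hw => ?_⟩
  haveI : Nonempty K := hne.to_subtype
  have h1 : (⨅ w : K, ‖(0:E) - w‖) ≤ ‖(0:E) - w‖ :=
    ciInf_le (f := fun w : K => ‖(0:E) - w‖) ⟨0, by rintro x ⟨u, rfl⟩; exact norm_nonneg _⟩ ⟨w, hw⟩
  rw [← hv] at h1
  rw [zero_sub, norm_neg] at h1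
  simpa using h1

lemma min_norm_dist {K : Set E} (hconv : Convex ℝ K) {v v' : E} (hv : v ∈ K) (hv' : v' ∈ K)
    (hmin : ∀ w ∈ K, ‖v‖ ≤ ‖w‖) : ‖v - v'‖ ^ 2 ≤ 2 * ‖v'‖ ^ 2 - 2 * ‖v‖ ^ 2 := by
  have hmid : (1/2 : ℝ) • v + (1/2 : ℝ) • v' ∈ K :=
    hconv hv hv' (by norm_num) (by norm_num) (by norm_num)
  have h1 : ‖v‖ ≤ ‖(1/2 : ℝ) • v + (1/2 : ℝ) • v'‖ := hmin _ hmid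
  have hpar := parallelogram_law_with_norm ℝ v v'
  have h2 : ‖v + v'‖ = 2 * ‖(1/2:ℝ) • v + (1/2:ℝ) • v'‖ := by
    have e : v + v' = (2:ℝ) • ((1/2:ℝ) • v + (1/2:ℝ) • v') := by module
    rw [e, norm_smul]
    norm_num
  have h3 : 2 * ‖v‖ ≤ ‖v + v'‖ := by rw [h2]; linarith
  nlinarith [h3, norm_nonneg (v + v'), norm_nonneg v, hpar]

set_option maxHeartbeats 1000000 in
lemma kirszbraun {ι : Type*} [Nonempty ι] (a b : ι → E)
    (hab : ∀ i j, ‖b i - b j‖ ≤ ‖a i - a j‖) :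
    ∃ y, ∀ i, ‖y - b i‖ ≤ ‖a i‖ := by
  classical
  set C : ι → Set E := fun i => Metric.closedBall (b i) ‖a i‖ with hCdef
  set KK : Finset ι → Set E := fun F => ⋂ i ∈ F, C i with hKKdef
  have hKconv : ∀ F, Convex ℝ (KK F) := fun F =>
    convex_iInter fun i => convex_iInter fun _ => convex_closedBall _ _
  have hKcl : ∀ F, IsClosed (KK F) := fun F =>
    isClosed_biInter fun i _ => Metric.isClosed_closedBall
  have hKKmem : ∀ (F : Finset ι) (x : E), x ∈ KK F ↔ ∀ i ∈ F, ‖x - b i‖ ≤ ‖a i‖ := by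
    intro F x
    simp only [hKKdef, Set.mem_iInter, hCdef, Metric.mem_closedBall, dist_eq_norm]
  have hKne : ∀ F : Finset ι, F.Nonempty → (KK F).Nonempty := by
    intro F hF
    haveI : Nonempty {i // i ∈ F} := ⟨⟨hF.choose, hF.choose_spec⟩⟩
    obtain ⟨y, hy⟩ := kirszbraun_finite (fun i : {i // i ∈ F} => a i)
      (fun i : {i // i ∈ F} => b i) (fun i j => hab i j)
    exact ⟨y, (hKKmem F y).2 fun i hi => hy ⟨i, hi⟩⟩
  have hKanti : ∀ F F' : Finset ι, F ⊆ F' → KK F' ⊆ KK F := by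
    intro F F' hFF x hx
    exact (hKKmem F x).2 fun i hi => (hKKmem F' x).1 hx i (hFF hi)
  have hex : ∀ F : Finset ι, ∃ v, F.Nonempty → (v ∈ KK F ∧ ∀ w ∈ KK F, ‖v‖ ≤ ‖w‖) := by
    intro F
    by_cases hF : F.Nonempty
    · obtain ⟨v, hv1, hv2⟩ := exists_min_norm (hKne F hF) (hKconv F) (hKcl F)
      exact ⟨v, fun _ => ⟨hv1, hv2⟩⟩
    · exact ⟨0, fun h => absurd h hF⟩
  choose Y hY using hex
  have hmono : ∀ F F' : Finset ι, F.Nonempty → F ⊆ F' → F'.Nonempty → ‖Y F‖ ≤ ‖Y F'‖ :=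
    fun F F' hF hFF hF' => (hY F hF).2 _ (hKanti F F' hFF (hY F' hF').1)
  have hpar : ∀ F F' : Finset ι, F.Nonempty → F ⊆ F' → F'.Nonempty →
      ‖Y F - Y F'‖ ^ 2 ≤ 2 * ‖Y F'‖ ^ 2 - 2 * ‖Y F‖ ^ 2 :=
    fun F F' hF hFF hF' => min_norm_dist (hKconv F) (hY F hF).1
      (hKanti F F' hFF (hY F' hF').1) (hY F hF).2
  set i₀ : ι := Classical.arbitrary ι with hi₀def
  have hbound : ∀ F : Finset ι, F.Nonempty → ‖Y F‖ ≤ ‖b i₀‖ + ‖a i₀‖ := by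
    intro F hF
    have hne' : (insert i₀ F).Nonempty := Finset.insert_nonempty _ _
    have h1 : ‖Y F‖ ≤ ‖Y (insert i₀ F)‖ :=
      hmono F _ hF (Finset.subset_insert _ _) hne'
    have h2 : ‖Y (insert i₀ F) - b i₀‖ ≤ ‖a i₀‖ :=
      (hKKmem _ _).1 (hY _ hne').1 i₀ (Finset.mem_insert_self _ _)
    have h3 : ‖Y (insert i₀ F)‖ ≤ ‖Y (insert i₀ F) - b i₀‖ + ‖b i₀‖ := by
      have := norm_add_le (Y (insert i₀ F) - b i₀) (b i₀)
      simpa using this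
    linarith
  set S : Set ℝ := Set.range (fun F : {F : Finset ι // F.Nonempty} => ‖Y F‖) with hSdef
  have hSne : S.Nonempty := ⟨‖Y {i₀}‖, ⟨⟨{i₀}, Finset.singleton_nonempty _⟩, rfl⟩⟩
  have hSbdd : BddAbove S := ⟨‖b i₀‖ + ‖a i₀‖, by rintro x ⟨F, rfl⟩; exact hbound F F.2⟩
  set r : ℝ := sSup S with hrdef
  have hler : ∀ F : Finset ι, F.Nonempty → ‖Y F‖ ≤ r := fun F hF =>
    le_csSup hSbdd ⟨⟨F, hF⟩, rfl⟩
  have hrpos : 0 ≤ r :=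
    le_trans (norm_nonneg _) (hler {i₀} (Finset.singleton_nonempty _))
  have hseq : ∀ n : ℕ, ∃ F : Finset ι, F.Nonempty ∧ r - 1/(n+1) < ‖Y F‖ := by
    intro n
    have h1 : r - 1/(n+1) < r := by
      have : (0:ℝ) < 1/(n+1) := by positivity
      linarith
    obtain ⟨x, hxS, hx⟩ := exists_lt_of_lt_csSup hSne h1
    obtain ⟨F, rfl⟩ := hxS
    exact ⟨F, F.2, hx⟩
  choose Fs hFs1 hFs2 using hseq
  set G : ℕ → Finset ι := fun n => (Finset.range (n+1)).biUnion Fs with hGdef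
  have hGsub : ∀ n, Fs n ⊆ G n := fun n =>
    Finset.subset_biUnion_of_mem Fs (Finset.self_mem_range_succ n)
  have hGne : ∀ n, (G n).Nonempty := fun n => (hFs1 n).mono (hGsub n)
  have hGmono : ∀ m n, m ≤ n → G m ⊆ G n := fun m n hmn =>
    Finset.biUnion_subset_biUnion_of_subset_left Fs
      (Finset.range_subset_range.2 (by omega))
  have hGlow : ∀ n, r - 1/(n+1) < ‖Y (G n)‖ := fun n =>
    lt_of_lt_of_le (hFs2 n) (hmono (Fs n) (G n) (hFs1 n) (hGsub n) (hGne n))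
  -- quantities
  set q : ℕ → ℝ := fun n => max 0 (r - 1/(n+1)) with hqdef
  have hq0 : ∀ n, 0 ≤ q n := fun n => le_max_left _ _
  have hqle : ∀ n, q n ≤ r := fun n => max_le hrpos (by
    have : (0:ℝ) < 1/(n+1) := by positivity
    linarith)
  have hqY : ∀ n, q n ≤ ‖Y (G n)‖ := fun n => max_le (norm_nonneg _) (hGlow n).le
  set bb : ℕ → ℝ := fun n => Real.sqrt (2 * r ^ 2 - 2 * q n ^ 2) with hbbdef
  have hbb0 : ∀ n, 0 ≤ bb n := fun n => Real.sqrt_nonneg _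
  have hqmono : ∀ m n, m ≤ n → q m ≤ q n := by
    intro m n hmn
    have hc : ((m:ℝ) + 1) ≤ ((n:ℝ) + 1) := by exact_mod_cast Nat.succ_le_succ hmn
    have h1 : (1:ℝ)/((n:ℝ)+1) ≤ 1/((m:ℝ)+1) := one_div_le_one_div_of_le (by positivity) hc
    exact max_le (hq0 n) (le_max_of_le_right (by linarith))
  have hbbmono : ∀ m n, m ≤ n → bb n ≤ bb m := by
    intro m n hmn
    apply Real.sqrt_le_sqrt
    have := pow_le_pow_left₀ (hq0 m) (hqmono m n hmn) 2
    linarith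
  -- distance bound between G-minimizers
  have hd : ∀ m n, m ≤ n → dist (Y (G m)) (Y (G n)) ≤ bb m := by
    intro m n hmn
    have h1 := hpar (G m) (G n) (hGne m) (hGmono m n hmn) (hGne n)
    have h2 : ‖Y (G n)‖ ≤ r := hler _ (hGne n)
    have h3 : q m ^ 2 ≤ ‖Y (G m)‖ ^ 2 := pow_le_pow_left₀ (hq0 m) (hqY m) 2
    have h4 : ‖Y (G n)‖ ^ 2 ≤ r ^ 2 := pow_le_pow_left₀ (norm_nonneg _) h2 2
    rw [dist_eq_norm]
    have h5 : ‖Y (G m) - Y (G n)‖ ^ 2 ≤ 2 * r ^ 2 - 2 * q m ^ 2 := by linarith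
    calc ‖Y (G m) - Y (G n)‖ = Real.sqrt (‖Y (G m) - Y (G n)‖ ^ 2) := by
          rw [Real.sqrt_sq (norm_nonneg _)]
      _ ≤ bb m := Real.sqrt_le_sqrt h5
  have hbbtend : Filter.Tendsto bb Filter.atTop (nhds 0) := by
    have h1 : Filter.Tendsto (fun n : ℕ => 1/((n:ℝ)+1)) Filter.atTop (nhds 0) :=
      tendsto_one_div_add_atTop_nhds_zero_nat
    have h2 : Filter.Tendsto q Filter.atTop (nhds r) := by
      have h3 : Filter.Tendsto (fun n : ℕ => max 0 (r - 1/((n:ℝ)+1))) Filter.atTop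
          (nhds (max 0 (r - 0))) :=
        Filter.Tendsto.max tendsto_const_nhds (tendsto_const_nhds.sub h1)
      have h4 : max (0:ℝ) (r - 0) = r := by rw [sub_zero]; exact max_eq_right hrpos
      rw [h4] at h3
      exact h3
    have h5 : Filter.Tendsto (fun n => 2 * r ^ 2 - 2 * q n ^ 2) Filter.atTop (nhds 0) := by
      have h6 : Filter.Tendsto (fun n => 2 * r ^ 2 - 2 * q n ^ 2) Filter.atTop
          (nhds (2 * r ^ 2 - 2 * r ^ 2)) :=
        Filter.Tendsto.sub tendsto_const_nhds (((h2.pow 2).const_mul 2))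
      simpa using h6
    have h7 := (Real.continuous_sqrt.tendsto 0).comp h5
    simpa [hbbdef, Real.sqrt_zero, Function.comp_def] using h7
  have hcauchy : CauchySeq (fun n => Y (G n)) := by
    apply cauchySeq_of_le_tendsto_0 (fun N => 2 * bb N)
    · intro n m N hn hm
      have hk1 : n ≤ max n m := le_max_left _ _
      have hk2 : m ≤ max n m := le_max_right _ _
      have d1 := hd n (max n m) hk1
      have d2 := hd m (max n m) hk2
      have := dist_triangle (Y (G n)) (Y (G (max n m))) (Y (G m))
      have e2 : dist (Y (G (max n m))) (Y (G m)) = dist (Y (G m)) (Y (G (max n m))) :=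
        dist_comm _ _
      have b1 : bb n ≤ bb N := hbbmono N n hn
      have b2 : bb m ≤ bb N := hbbmono N m hm
      linarith
    · simpa using hbbtend.const_mul 2
  obtain ⟨y, hy⟩ := cauchySeq_tendsto_of_complete hcauchy
  refine ⟨y, fun i => ?_⟩
  have hinsne : ∀ n, (insert i (G n)).Nonempty := fun n => Finset.insert_nonempty _ _
  have hmemi : ∀ n, Y (insert i (G n)) ∈ C i := fun n => by
    have h1 := (hKKmem _ _).1 (hY _ (hinsne n)).1 i (Finset.mem_insert_self _ _)
    simpa [hCdef, Metric.mem_closedBall, dist_eq_norm] using h1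
  have hd2 : ∀ n, dist (Y (insert i (G n))) (Y (G n)) ≤ bb n := by
    intro n
    have h1 := hpar (G n) (insert i (G n)) (hGne n) (Finset.subset_insert _ _) (hinsne n)
    have h2 : ‖Y (insert i (G n))‖ ≤ r := hler _ (hinsne n)
    have h3 : q n ^ 2 ≤ ‖Y (G n)‖ ^ 2 := pow_le_pow_left₀ (hq0 n) (hqY n) 2
    have h4 : ‖Y (insert i (G n))‖ ^ 2 ≤ r ^ 2 := pow_le_pow_left₀ (norm_nonneg _) h2 2
    rw [dist_comm, dist_eq_norm]
    have h5 : ‖Y (G n) - Y (insert i (G n))‖ ^ 2 ≤ 2 * r ^ 2 - 2 * q n ^ 2 := by linarith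
    calc ‖Y (G n) - Y (insert i (G n))‖
        = Real.sqrt (‖Y (G n) - Y (insert i (G n))‖ ^ 2) := by
          rw [Real.sqrt_sq (norm_nonneg _)]
      _ ≤ bb n := Real.sqrt_le_sqrt h5
  have htend2 : Filter.Tendsto (fun n => Y (insert i (G n))) Filter.atTop (nhds y) := by
    rw [tendsto_iff_dist_tendsto_zero]
    have hub : ∀ n, dist (Y (insert i (G n))) y ≤ bb n + dist (Y (G n)) y := fun n =>
      le_trans (dist_triangle _ (Y (G n)) y) (by linarith [hd2 n])
    have hlb : ∀ n, (0:ℝ) ≤ dist (Y (insert i (G n))) y := fun n => dist_nonneg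
    have hsum : Filter.Tendsto (fun n => bb n + dist (Y (G n)) y) Filter.atTop (nhds 0) := by
      have := hbbtend.add (tendsto_iff_dist_tendsto_zero.1 hy)
      simpa using this
    exact squeeze_zero hlb hub hsum
  have hyC : y ∈ C i := Metric.isClosed_closedBall.mem_of_tendsto htend2
    (Filter.Eventually.of_forall hmemi)
  simpa [hCdef, Metric.mem_closedBall, dist_eq_norm] using hyC

variable {E : Type*} [NormedAddCommGroup E] [InnerProductSpace ℝ E]


lemma IsMaxMonotone.graph_nonempty {A : E → Set E} (hA : IsMaxMonotone A) :
    ∃ x u, u ∈ A x := by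
  by_contra h
  push_neg at h
  have hB : IsMonotoneSet (fun _ : E => ({0} : Set E)) := by
    intro x y u v hu hv
    simp only [Set.mem_singleton_iff] at hu hv
    simp [hu, hv]
  have heq := hA.2 _ hB (fun x s hs => absurd hs (h x s)) 0
  exact h 0 0 (heq ▸ rfl)

lemma minty {A : E → Set E} [CompleteSpace E] (hA : IsMaxMonotone A) (w : E) :
    ∃ x u, u ∈ A x ∧ x + u = w := by
  classical
  haveI : Nonempty {p : E × E // p.2 ∈ A p.1} := by
    obtain ⟨x, u, hu⟩ := hA.graph_nonempty
    exact ⟨⟨(x, u), hu⟩⟩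
  have hlip : ∀ p q : {p : E × E // p.2 ∈ A p.1},
      ‖(p.1.1 - p.1.2) - (q.1.1 - q.1.2)‖ ≤ ‖(p.1.1 + p.1.2 - w) - (q.1.1 + q.1.2 - w)‖ := by
    intro p q
    have hm := hA.1 p.1.1 q.1.1 p.1.2 q.1.2 p.2 q.2
    have e1 : p.1.1 - p.1.2 - (q.1.1 - q.1.2) = (p.1.1 - q.1.1) - (p.1.2 - q.1.2) := by abel
    have e2 : p.1.1 + p.1.2 - w - (q.1.1 + q.1.2 - w)
        = (p.1.1 - q.1.1) + (p.1.2 - q.1.2) := by abel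
    rw [e1, e2]
    have h1 := norm_sub_sq_real (p.1.1 - q.1.1) (p.1.2 - q.1.2)
    have h2 := norm_add_sq_real (p.1.1 - q.1.1) (p.1.2 - q.1.2)
    nlinarith [norm_nonneg ((p.1.1 - q.1.1) - (p.1.2 - q.1.2)),
      norm_nonneg ((p.1.1 - q.1.1) + (p.1.2 - q.1.2))]
  obtain ⟨y, hy⟩ := kirszbraun (fun p : {p : E × E // p.2 ∈ A p.1} => p.1.1 + p.1.2 - w)
    (fun p => p.1.1 - p.1.2) hlip
  set xb : E := (1/2 : ℝ) • (w + y) with hxb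
  set ub : E := (1/2 : ℝ) • (w - y) with hub
  have hxu : xb + ub = w := by rw [hxb, hub]; module
  have hkey : ∀ p : E × E, p.2 ∈ A p.1 → (0:ℝ) ≤ ⟪xb - p.1, ub - p.2⟫_ℝ := by
    intro p hp
    have h1 := hy ⟨p, hp⟩
    have e1 : y - (p.1 - p.2) = (xb - p.1) - (ub - p.2) := by rw [hxb, hub]; module
    have e2 : p.1 + p.2 - w = -((xb - p.1) + (ub - p.2)) := by rw [hxb, hub]; module
    rw [e1, e2, norm_neg] at h1
    have h3 := norm_sub_sq_real (xb - p.1) (ub - p.2)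
    have h4 := norm_add_sq_real (xb - p.1) (ub - p.2)
    nlinarith [norm_nonneg ((xb - p.1) - (ub - p.2)), norm_nonneg ((xb - p.1) + (ub - p.2))]
  set B : E → Set E := fun z => A z ∪ {u | z = xb ∧ u = ub} with hB
  have hBmono : IsMonotoneSet B := by
    rintro x y u v (hu | ⟨rfl, rfl⟩) (hv | ⟨rfl, rfl⟩)
    · exact hA.1 x y u v hu hv
    · have := hkey (x, u) hu
      rw [show x - xb = -(xb - x) by abel, show u - ub = -(ub - u) by abel, inner_neg_neg]
      exact this
    · exact hkey (y, v) hv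
    · simp
  have heq := hA.2 B hBmono (fun z => Set.subset_union_left) xb
  have hub' : ub ∈ B xb := Or.inr ⟨rfl, rfl⟩
  rw [heq] at hub'
  exact ⟨xb, ub, hub', hxu⟩

lemma IsMaxMonotone.smul {A : E → Set E} (hA : IsMaxMonotone A) {c : ℝ} (hc : 0 < c) :
    IsMaxMonotone (fun x => (c • ·) '' A x) := by
  constructor
  · rintro x y u v ⟨u', hu', rfl⟩ ⟨v', hv', rfl⟩
    have h := hA.1 x y u' v' hu' hv'
    rw [← smul_sub, real_inner_smul_right]
    exact mul_nonneg hc.le h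
  · intro B hB hsub x
    have hB' : IsMonotoneSet (fun z => (c⁻¹ • ·) '' B z) := by
      rintro x y u v ⟨u', hu', rfl⟩ ⟨v', hv', rfl⟩
      have h := hB x y u' v' hu' hv'
      rw [← smul_sub, real_inner_smul_right]
      exact mul_nonneg (by positivity) h
    have hsub' : ∀ z, A z ⊆ (c⁻¹ • ·) '' B z := by
      intro z u hu
      exact ⟨c • u, hsub z ⟨u, hu, rfl⟩, by
        show c⁻¹ • c • u = u
        rw [smul_smul, inv_mul_cancel₀ hc.ne', one_smul]⟩
    have hAB := hA.2 _ hB' hsub'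
    ext v
    constructor
    · intro hv
      have : c⁻¹ • v ∈ A x := by
        rw [← hAB x]; exact ⟨v, hv, rfl⟩
      exact ⟨c⁻¹ • v, this, by
        show c • c⁻¹ • v = v
        rw [smul_smul, mul_inv_cancel₀ hc.ne', one_smul]⟩
    · rintro ⟨u, hu, rfl⟩
      rw [← hAB x] at hu
      obtain ⟨v', hv', rfl⟩ := hu
      show c • c⁻¹ • v' ∈ B x
      rw [smul_smul, mul_inv_cancel₀ hc.ne', one_smul]
      exact hv'

set_option maxHeartbeats 1000000 in
lemma resolvent_exists {A : E → Set E} [CompleteSpace E] (hA : IsMaxMonotone A)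
    (U : E →L[ℝ] E) {τ : ℝ} (hτ : 0 < τ) (hU : ∀ x, τ * ‖x‖ ^ 2 ≤ ⟪U x, x⟫_ℝ) :
    ∃ r : E → E, Continuous r ∧ (∀ c, c - U (r c) ∈ A (r c)) ∧
      (∀ c x, c - U x ∈ A x → x = r c) := by
  classical
  haveI : Nonempty E := ⟨0⟩
  set lam : ℝ := τ / (‖U‖ ^ 2 + 1) with hlamdef
  have hlampos : 0 < lam := by
    apply div_pos hτ
    positivity
  set A' : E → Set E := fun x => (lam • ·) '' A x with hA'def
  have hA' : IsMaxMonotone A' := hA.smul hlampos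
  have hJex : ∀ w : E, ∃ x, w - x ∈ A' x := by
    intro w
    obtain ⟨x, u, hu, hxu⟩ := minty hA' w
    exact ⟨x, by rw [show w - x = u by rw [← hxu]; abel]; exact hu⟩
  choose J hJ using hJex
  have hJlip : ∀ w w', ‖J w - J w'‖ ≤ ‖w - w'‖ := by
    intro w w'
    have hm := hA'.1 (J w) (J w') _ _ (hJ w) (hJ w')
    have e : (w - J w) - (w' - J w') = (w - w') - (J w - J w') := by abel
    rw [e, inner_sub_right] at hm
    have h1 : ‖J w - J w'‖ ^ 2 ≤ ⟪J w - J w', w - w'⟫_ℝ := by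
      rw [real_inner_self_eq_norm_sq] at hm
      linarith [hm]
    have h2 := real_inner_le_norm (J w - J w') (w - w')
    nlinarith [norm_nonneg (J w - J w'), norm_nonneg (w - w')]
  -- the contraction map
  set T : E → E → E := fun c x => J (x - lam • U x + lam • c) with hTdef
  have hstep : ∀ x x' : E, ‖(x - lam • U x) - (x' - lam • U x')‖ ^ 2
      ≤ (1 - 2 * lam * τ + lam ^ 2 * ‖U‖ ^ 2) * ‖x - x'‖ ^ 2 := by
    intro x x'
    set h := x - x' with hh
    have e : (x - lam • U x) - (x' - lam • U x') = h - lam • U h := by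
      rw [hh, map_sub]; module
    rw [e, norm_sub_sq_real, real_inner_smul_right, norm_smul]
    have h1 : ⟪h, U h⟫_ℝ = ⟪U h, h⟫_ℝ := real_inner_comm _ _
    have h2 := hU h
    have h3 : ‖U h‖ ≤ ‖U‖ * ‖h‖ := U.le_opNorm h
    have h4 : ‖U h‖ ^ 2 ≤ ‖U‖ ^ 2 * ‖h‖ ^ 2 := by
      nlinarith [norm_nonneg (U h), norm_nonneg h, norm_nonneg (U : E →L[ℝ] E)]
    have h5 : ‖lam‖ = lam := by rw [Real.norm_eq_abs]; exact abs_of_pos hlampos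
    rw [h5]
    nlinarith [hlampos]
  set s : ℝ := max (1 - 2 * lam * τ + lam ^ 2 * ‖U‖ ^ 2) 0 with hsdef
  have hs0 : 0 ≤ s := le_max_right _ _
  have hs1 : s < 1 := by
    have hlt : 1 - 2 * lam * τ + lam ^ 2 * ‖U‖ ^ 2 < 1 := by
      have hU2 : lam * ‖U‖ ^ 2 < τ := by
        rw [hlamdef]
        rw [div_mul_eq_mul_div, div_lt_iff₀ (by positivity)]
        nlinarith [sq_nonneg ‖U‖]
      nlinarith [hlampos]
    exact max_lt hlt one_pos
  have hTlip : ∀ c x x', ‖T c x - T c x'‖ ≤ Real.sqrt s * ‖x - x'‖ := by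
    intro c x x'
    have h1 : ‖T c x - T c x'‖ ≤ ‖(x - lam • U x) - (x' - lam • U x')‖ := by
      have := hJlip (x - lam • U x + lam • c) (x' - lam • U x' + lam • c)
      rw [hTdef]
      simpa [show (x - lam • U x + lam • c) - (x' - lam • U x' + lam • c)
        = (x - lam • U x) - (x' - lam • U x') by abel] using this
    have h2 : ‖(x - lam • U x) - (x' - lam • U x')‖ ^ 2 ≤ s * ‖x - x'‖ ^ 2 := by
      refine le_trans (hstep x x') ?_
      exact mul_le_mul_of_nonneg_right (le_max_left _ _) (sq_nonneg _)
    calc ‖T c x - T c x'‖ ≤ ‖(x - lam • U x) - (x' - lam • U x')‖ := h1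
      _ = Real.sqrt (‖(x - lam • U x) - (x' - lam • U x')‖ ^ 2) := by
          rw [Real.sqrt_sq (norm_nonneg _)]
      _ ≤ Real.sqrt (s * ‖x - x'‖ ^ 2) := Real.sqrt_le_sqrt h2
      _ = Real.sqrt s * ‖x - x'‖ := by
          rw [Real.sqrt_mul hs0, Real.sqrt_sq (norm_nonneg _)]
  set K : NNReal := Real.toNNReal (Real.sqrt s) with hKdef
  have hKlt : K < 1 := by
    rw [hKdef]
    have : Real.sqrt s < 1 := by
      have := Real.sqrt_lt_sqrt hs0 hs1
      simpa using this
    exact_mod_cast Real.toNNReal_lt_one.2 this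
  have hcontr : ∀ c, ContractingWith K (T c) := by
    intro c
    refine ⟨hKlt, LipschitzWith.of_dist_le_mul fun x x' => ?_⟩
    rw [dist_eq_norm, dist_eq_norm]
    have := hTlip c x x'
    have hcoe : (K : ℝ) = Real.sqrt s := Real.coe_toNNReal _ (Real.sqrt_nonneg _)
    rw [hcoe]
    exact this
  set r : E → E := fun c => (hcontr c).fixedPoint (T c) with hrdef
  have hfix : ∀ c, T c (r c) = r c := fun c => (hcontr c).fixedPoint_isFixedPt
  have hrsol : ∀ c, c - U (r c) ∈ A (r c) := by
    intro c
    have h1 := hJ (r c - lam • U (r c) + lam • c)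
    rw [show J (r c - lam • U (r c) + lam • c) = r c from hfix c] at h1
    have e : (r c - lam • U (r c) + lam • c) - r c = lam • (c - U (r c)) := by
      rw [smul_sub]; abel
    rw [e] at h1
    obtain ⟨u, hu, hequ⟩ := h1
    have : u = c - U (r c) := by
      have := smul_right_injective E hlampos.ne' hequ
      exact this
    rwa [← this]
  have huni : ∀ c x, c - U x ∈ A x → x = r c := by
    intro c x hx
    have hm := hA.1 x (r c) _ _ hx (hrsol c)
    have e : (c - U x) - (c - U (r c)) = -(U (x - r c)) := by rw [map_sub]; abel
    rw [e, inner_neg_right] at hm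
    have h1 : ⟪x - r c, U (x - r c)⟫_ℝ ≤ 0 := by linarith
    have h2 := hU (x - r c)
    rw [real_inner_comm] at h1
    have h3 : ‖x - r c‖ ^ 2 ≤ 0 := by nlinarith
    have h4 : x - r c = 0 := by
      rw [← norm_eq_zero]
      nlinarith [norm_nonneg (x - r c)]
    rw [← sub_eq_zero]
    exact h4
  refine ⟨r, ?_, hrsol, huni⟩
  -- r is (1/τ)-Lipschitz
  have hrlip : ∀ c c', ‖r c - r c'‖ ≤ τ⁻¹ * ‖c - c'‖ := by
    intro c c'
    have hm := hA.1 (r c) (r c') _ _ (hrsol c) (hrsol c')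
    have e : (c - U (r c)) - (c' - U (r c')) = (c - c') - U (r c - r c') := by
      rw [map_sub]; abel
    rw [e, inner_sub_right] at hm
    have h1 := hU (r c - r c')
    rw [real_inner_comm] at h1
    have h2 : τ * ‖r c - r c'‖ ^ 2 ≤ ⟪r c - r c', c - c'⟫_ℝ := by linarith
    have h3 := real_inner_le_norm (r c - r c') (c - c')
    have h4 : τ * ‖r c - r c'‖ ^ 2 ≤ ‖r c - r c'‖ * ‖c - c'‖ := by linarith
    rcases eq_or_lt_of_le (norm_nonneg (r c - r c')) with hz | hz
    · rw [← hz]; positivity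
    · have h5 : τ * ‖r c - r c'‖ ≤ ‖c - c'‖ := by
        apply le_of_mul_le_mul_right ?_ hz
        nlinarith [h4]
      rw [inv_mul_eq_div, le_div_iff₀ hτ]
      linarith
  have hlipr : LipschitzWith (Real.toNNReal τ⁻¹) r :=
    LipschitzWith.of_dist_le_mul fun c c' => by
      rw [dist_eq_norm, dist_eq_norm, Real.coe_toNNReal _ (by positivity)]
      exact hrlip c c'
  exact hlipr.continuous

end KirszbraunAux

/-- Lemma 3.6: block-triangular resolvents.  If `A` is block separable with maximally
monotone blocks and `H` is block lower triangular with strongly positive self-adjoint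
diagonal blocks, then the resolvent `(H + A)⁻¹` is single-valued with full domain and
continuous, and its value is obtained recursively one block at a time. -/
theorem block_triangular_resolvent
    {N : ℕ} (Hs : Fin N → Type*)
    [∀ i, NormedAddCommGroup (Hs i)] [∀ i, InnerProductSpace ℝ (Hs i)]
    [∀ i, CompleteSpace (Hs i)]
    (A : ∀ i, Hs i → Set (Hs i)) (hA : ∀ i, IsMaxMonotone (A i))
    (Hop : ∀ i j : Fin N, Hs j →L[ℝ] Hs i)
    (htri : ∀ i j : Fin N, i < j → Hop i j = 0)
    (hdiag_sym : ∀ (i : Fin N) (x y : Hs i), ⟪Hop i i x, y⟫_ℝ = ⟪x, Hop i i y⟫_ℝ)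
    (τ : Fin N → ℝ) (hτ : ∀ i, 0 < τ i)
    (hdiag_pos : ∀ (i : Fin N) (x : Hs i), τ i * ‖x‖ ^ 2 ≤ ⟪Hop i i x, x⟫_ℝ) :
    ∃ G : PiLp 2 Hs → PiLp 2 Hs, Continuous G ∧
      (∀ z : PiLp 2 Hs,
        (∀ i, z i - ∑ j, Hop i j (G z j) ∈ A i (G z i)) ∧
        (∀ w : PiLp 2 Hs, (∀ i, z i - ∑ j, Hop i j (w j) ∈ A i (w i)) → w = G z)) ∧
      (∀ (z : PiLp 2 Hs) (i : Fin N) (v : Hs i),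
        (z i - ∑ j ∈ Finset.univ.filter (fun j => j < i), Hop i j (G z j)
          - Hop i i v ∈ A i v) ↔ v = G z i) := by
  classical
  choose r hrcont hrsol hruni using fun i =>
    resolvent_exists (hA i) (Hop i i) (hτ i) (fun x => hdiag_pos i x)
  set low : (i : Fin N) → (∀ j, Hs j) → Hs i :=
    fun i w => ∑ j ∈ Finset.univ.filter (fun j => j < i), Hop i j (w j) with hlowdef
  have hsplit : ∀ (i : Fin N) (w : ∀ j, Hs j),
      ∑ j, Hop i j (w j) = low i w + Hop i i (w i) := by
    intro i w
    rw [← Finset.sum_filter_add_sum_filter_not Finset.univ (fun j => j < i)]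
    congr 1
    refine Finset.sum_eq_single_of_mem i ?_ ?_
    · simp
    · intro j hj hji
      have hj' : ¬ j < i := (Finset.mem_filter.1 hj).2
      have : i < j := lt_of_le_of_ne (le_of_not_gt hj') (Ne.symm hji)
      rw [htri i j this]
      rfl
  set Φ : (∀ j, Hs j) → (∀ j, Hs j) → (∀ j, Hs j) :=
    fun z y i => r i (z i - low i y) with hΦdef
  set Gf : (∀ j, Hs j) → (∀ j, Hs j) := fun z => (Φ z)^[N] 0 with hGfdef
  have hind : ∀ (z : ∀ j, Hs j) (k : ℕ) (y y' : ∀ j, Hs j), ∀ i : Fin N, i.val < k →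
      (Φ z)^[k] y i = (Φ z)^[k] y' i := by
    intro z k
    induction k with
    | zero => intro y y' i hi; exact absurd hi (Nat.not_lt_zero _)
    | succ k ih =>
      intro y y' i hi
      rw [Function.iterate_succ_apply', Function.iterate_succ_apply']
      show r i (z i - low i ((Φ z)^[k] y)) = r i (z i - low i ((Φ z)^[k] y'))
      congr 2
      refine Finset.sum_congr rfl fun j hj => ?_
      have hji : j < i := (Finset.mem_filter.1 hj).2
      rw [ih y y' j (by omega)]
  have hfixG : ∀ z i, Gf z i = r i (z i - low i (Gf z)) := by
    intro z i
    have h1 : Φ z ((Φ z)^[N] 0) = (Φ z)^[N] (Φ z 0) := by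
      rw [← Function.iterate_succ_apply' (Φ z) N 0, Function.iterate_succ_apply]
    have h2 : (Φ z)^[N] (Φ z 0) i = (Φ z)^[N] 0 i := hind z N _ _ i i.isLt
    calc Gf z i = (Φ z)^[N] 0 i := rfl
      _ = (Φ z)^[N] (Φ z 0) i := h2.symm
      _ = Φ z ((Φ z)^[N] 0) i := (congrFun h1 i).symm
      _ = r i (z i - low i (Gf z)) := rfl
  -- continuity of Gf in the product topology
  have hGfcont : Continuous Gf := by
    set Θ : ((∀ j, Hs j) × (∀ j, Hs j)) → ((∀ j, Hs j) × (∀ j, Hs j)) :=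
      fun p => (p.1, Φ p.1 p.2) with hΘdef
    have hΘcont : Continuous Θ := by
      refine continuous_fst.prodMk (continuous_pi fun i => ?_)
      refine (hrcont i).comp ?_
      refine Continuous.sub ((continuous_apply i).comp continuous_fst) ?_
      refine continuous_finset_sum _ fun j hj => ?_
      exact (Hop i j).continuous.comp ((continuous_apply (j : Fin N)).comp continuous_snd)
    have hiter : ∀ (k : ℕ) (z y : ∀ j, Hs j), (Θ^[k] (z, y)).2 = (Φ z)^[k] y := by
      intro k
      induction k with
      | zero => intro z y; rfl
      | succ k ih =>
        intro z y
        rw [Function.iterate_succ_apply, Function.iterate_succ_apply]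
        have h1 : Θ (z, y) = (z, Φ z y) := rfl
        rw [h1, ih]
    have : Continuous fun z : ∀ j, Hs j => (Θ^[N] (z, (0 : ∀ j, Hs j))).2 :=
      continuous_snd.comp ((hΘcont.iterate N).comp (continuous_id.prodMk continuous_const))
    have he : Gf = fun z => (Θ^[N] (z, (0 : ∀ j, Hs j))).2 := by
      funext z
      rw [hiter N z 0]
    rw [he]
    exact this
  -- the solution property
  have hsol : ∀ (z : ∀ j, Hs j) (i : Fin N),
      z i - ∑ j, Hop i j (Gf z j) ∈ A i (Gf z i) := by
    intro z i
    rw [hsplit i (Gf z)]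
    have h1 := hrsol i (z i - low i (Gf z))
    rw [← hfixG z i] at h1
    have e : z i - (low i (Gf z) + Hop i i (Gf z i))
        = z i - low i (Gf z) - Hop i i (Gf z i) := by abel
    rw [e]
    exact h1
  -- uniqueness
  have huniq : ∀ (z w : ∀ j, Hs j),
      (∀ i, z i - ∑ j, Hop i j (w j) ∈ A i (w i)) → w = Gf z := by
    intro z w hw
    have H : ∀ n, ∀ i : Fin N, i.val < n → w i = Gf z i := by
      intro n
      induction n with
      | zero => intro i hi; exact absurd hi (Nat.not_lt_zero _)
      | succ n ih =>
        intro i hi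
        by_cases hin : i.val < n
        · exact ih i hin
        · have hival : i.val = n := by omega
          have hlow : low i w = low i (Gf z) := by
            refine Finset.sum_congr rfl fun j hj => ?_
            have hji : j < i := (Finset.mem_filter.1 hj).2
            rw [ih j (by omega)]
          have hu := hw i
          have hv := hsol z i
          have hm := (hA i).1 (w i) (Gf z i) _ _ hu hv
          have e : (z i - ∑ j, Hop i j (w j)) - (z i - ∑ j, Hop i j (Gf z j))
              = -(Hop i i (w i - Gf z i)) := by
            rw [hsplit i w, hsplit i (Gf z), hlow, map_sub]
            abel
          rw [e, inner_neg_right] at hm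
          have h1 := hdiag_pos i (w i - Gf z i)
          rw [real_inner_comm] at h1
          have h2 : ‖w i - Gf z i‖ ^ 2 ≤ 0 := by nlinarith [hτ i]
          have h3 : w i - Gf z i = 0 := by
            rw [← norm_eq_zero]
            nlinarith [norm_nonneg (w i - Gf z i)]
          exact sub_eq_zero.1 h3
    funext i
    exact H N i i.isLt
  refine ⟨fun z => WithLp.toLp 2 (Gf (WithLp.ofLp z)), ?_,
    fun z => ⟨hsol z.ofLp, fun w hw => congrArg (WithLp.toLp 2) (huniq z.ofLp w.ofLp hw)⟩, ?_⟩
  · have h1 : Continuous fun z : PiLp 2 Hs =>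
        WithLp.toLp 2 (Gf (WithLp.ofLp z)) :=
      (PiLp.continuous_toLp _ _).comp (hGfcont.comp (PiLp.continuous_ofLp _ _))
    exact h1
  · intro z i v
    constructor
    · intro h
      have := hruni i (z i - low i (Gf z)) v (by
        have e : z i - low i (Gf z) - Hop i i v
            = z i - (∑ j ∈ Finset.univ.filter (fun j => j < i), Hop i j (Gf z j))
              - Hop i i v := rfl
        rw [e]
        exact h)
      rw [this, ← hfixG z i]
    · intro hv
      rw [hv]
      have h1 := hrsol i (z i - low i (Gf z))
      rw [← hfixG z i] at h1
      exact h1
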